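/- Let τ ∈ ℂ satisfy either (Re τ ≥ 0 and (Im τ)² > Re τ + 1/4) or (Re τ < 0 and (Im τ)² > −Re τ + 1/4). Then for any positive integers N₁, N₂, W₁, W₂, every integer solution (x, y) of the equation (N₁W₂/(N₂W₁))·x² − 2(Re τ)·x·y + (N₂W₁/(N₁W₂))·|τ|²·y² = 1 satisfies x = 0 or y = 0. -/

import Mathlib

set_option maxHeartbeats 1000000


/-- Proposition 3.2: if `τ` lies in the indicated region (covering almost all of the
fundamental domain), then for any positive integers `N₁, N₂, W₁, W₂` every integer
solution of the duality-defect quadratic equation has `x = 0` or `y = 0`. -/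
theorem integer_solutions_vanish (τ : ℂ)
    (hτ : (0 ≤ τ.re ∧ τ.im ^ 2 > τ.re + 1 / 4) ∨ (τ.re < 0 ∧ τ.im ^ 2 > -τ.re + 1 / 4))
    (N₁ N₂ W₁ W₂ : ℕ) (hN₁ : 0 < N₁) (hN₂ : 0 < N₂) (hW₁ : 0 < W₁) (hW₂ : 0 < W₂)
    (x y : ℤ)
    (hxy : ((N₁ * W₂ : ℝ) / (N₂ * W₁)) * x ^ 2 - 2 * τ.re * (x * y)
        + ((N₂ * W₁ : ℝ) / (N₁ * W₂)) * ‖τ‖ ^ 2 * y ^ 2 = 1) :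
    x = 0 ∨ y = 0 := by
  by_contra h
  push_neg at h
  obtain ⟨hx, hy⟩ := h
  set a : ℝ := τ.re with ha
  set r : ℝ := ‖τ‖ with hrdef
  clear_value r
  have hr0 : 0 ≤ r := by rw [hrdef]; exact norm_nonneg τ
  have hr2 : r ^ 2 = τ.re ^ 2 + τ.im ^ 2 := by
    rw [hrdef, Complex.sq_norm, Complex.normSq_apply]; ring
  -- r > |a| + 1/2
  have habs : |a| + 1 / 2 < r := by
    have h1 : (|a| + 1 / 2) ^ 2 < r ^ 2 := by
      rcases hτ with ⟨h0, hb⟩ | ⟨h0, hb⟩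
      · rw [abs_of_nonneg h0]; nlinarith
      · rw [abs_of_neg h0]; nlinarith
    nlinarith [abs_nonneg a]
  have hra : a + 1 / 2 < r := lt_of_le_of_lt (by linarith [le_abs_self a]) habs
  have hrb : -a + 1 / 2 < r := lt_of_le_of_lt (by linarith [neg_abs_le a]) habs
  -- positivity of the coefficient
  have hN1 : (0 : ℝ) < (N₁ : ℝ) := by exact_mod_cast hN₁
  have hN2 : (0 : ℝ) < (N₂ : ℝ) := by exact_mod_cast hN₂
  have hW1 : (0 : ℝ) < (W₁ : ℝ) := by exact_mod_cast hW₁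
  have hW2 : (0 : ℝ) < (W₂ : ℝ) := by exact_mod_cast hW₂
  set A : ℝ := (N₁ * W₂ : ℝ) / (N₂ * W₁) with hAdef
  have hA : 0 < A := div_pos (by positivity) (by positivity)
  -- rewrite the second coefficient as r^2 / A
  have hinv : ((N₂ * W₁ : ℝ) / (N₁ * W₂)) = 1 / A := by
    rw [hAdef]
    field_simp
  clear_value A
  rw [hinv] at hxy
  clear hinv hAdef
  -- multiply through by A
  have heq : A ^ 2 * (x : ℝ) ^ 2 - 2 * a * A * ((x : ℝ) * y) + r ^ 2 * (y : ℝ) ^ 2 = A := by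
    have h3 : 1 / A * r ^ 2 * (y : ℝ) ^ 2 = 1 - A * (x : ℝ) ^ 2 + 2 * a * ((x : ℝ) * y) := by
      linarith [hxy]
    have h4 : r ^ 2 * (y : ℝ) ^ 2 = A * (1 - A * (x : ℝ) ^ 2 + 2 * a * ((x : ℝ) * y)) := by
      rw [← h3]; field_simp
    linear_combination h4
  -- integer bounds
  have hx1 : (1 : ℝ) ≤ (x : ℝ) ^ 2 := by
    have : (1 : ℤ) ≤ x ^ 2 := by rcases lt_or_gt_of_ne hx with h | h <;> nlinarith
    exact_mod_cast this
  have hy1 : (1 : ℝ) ≤ (y : ℝ) ^ 2 := by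
    have : (1 : ℤ) ≤ y ^ 2 := by rcases lt_or_gt_of_ne hy with h | h <;> nlinarith
    exact_mod_cast this
  have hxy1 : x * y ≠ 0 := mul_ne_zero hx hy
  rcases lt_or_gt_of_ne hxy1 with ht | ht
  · -- x*y ≤ -1
    have ht' : ((x : ℝ) * y) ≤ -1 := by
      have : x * y ≤ -1 := by omega
      calc ((x : ℝ) * y) = ((x * y : ℤ) : ℝ) := by push_cast; ring
        _ ≤ -1 := by exact_mod_cast this
    nlinarith [sq_nonneg (A * (x : ℝ) + r * y), mul_pos hA (show (0 : ℝ) < r + a - 1 / 2 by linarith),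
      mul_nonneg hA.le (show (0 : ℝ) ≤ -((x : ℝ) * y) - 1 by linarith)]
  · -- x*y ≥ 1
    have ht' : (1 : ℝ) ≤ ((x : ℝ) * y) := by
      have : 1 ≤ x * y := by omega
      calc (1 : ℝ) ≤ ((x * y : ℤ) : ℝ) := by exact_mod_cast this
        _ = ((x : ℝ) * y) := by push_cast; ring
    nlinarith [sq_nonneg (A * (x : ℝ) - r * y), mul_pos hA (show (0 : ℝ) < r - a - 1 / 2 by linarith),
      mul_nonneg hA.le (show (0 : ℝ) ≤ ((x : ℝ) * y) - 1 by linarith)]
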